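/- If A is a normalized potential whose transfer operator L_A satisfies the Ruelle–Perron–Frobenius hypotheses with spectral gap, then the subspace C = {g − g∘T + c : g ∈ X(Ω), c ∈ ℝ} is closed in X(Ω). -/

import Mathlib

set_option maxHeartbeats 1000000


/-- the subspace C = {g - g∘T + c} of coboundaries plus constants is
closed in X(Ω). `Tc` is the composition operator, `L` the normalized transfer
operator, `e` the constant function 1, `μ` the Gibbs measure functional. -/
theorem coboundaries_plus_constants_closed
    {X : Type*} [NormedAddCommGroup X] [NormedSpace ℝ X] [CompleteSpace X]
    (L Tc : X →L[ℝ] X) (μ : X →L[ℝ] ℝ) (e : X)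
    (hμL : ∀ f : X, μ (L f) = μ f)
    (hμT : ∀ f : X, μ (Tc f) = μ f)
    (hleft : ∀ f : X, L (Tc f) = f)
    (hμe : μ e = 1) (hLe : L e = e) (hTe : Tc e = e)
    (D δ : ℝ) (hD : 0 < D) (hδ0 : 0 < δ) (hδ1 : δ < 1)
    (hgap : ∀ (n : ℕ) (f : X), μ f = 0 → ‖(L ^ n) f‖ ≤ D * (1 - δ) ^ n * ‖f‖) :
    IsClosed {f : X | ∃ (g : X) (c : ℝ), f = g - Tc g + c • e} := by
  have h1δ0 : (0:ℝ) ≤ 1 - δ := by linarith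
  have h1δ1 : (1:ℝ) - δ < 1 := by linarith
  set P : X →L[ℝ] X := ContinuousLinearMap.id ℝ X - μ.smulRight e with hPdef
  have hPapply : ∀ f : X, P f = f - μ f • e := fun f => rfl
  have hμP : ∀ f : X, μ (P f) = 0 := by
    intro f
    simp [hPapply, map_sub, map_smul, hμe]
  have hgeo : Summable (fun n : ℕ => D * (1 - δ) ^ n) :=
    (summable_geometric_of_lt_one h1δ0 h1δ1).mul_left D
  have hsum : ∀ h : X, μ h = 0 → Summable (fun n : ℕ => (L ^ n) h) := by
    intro h hh
    apply Summable.of_norm_bounded (g := fun n : ℕ => D * (1 - δ) ^ n * ‖h‖)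
      (hgeo.mul_right _)
    intro n
    exact hgap n h hh
  have hzero : ∀ h : X, μ h = 0 →
      Filter.Tendsto (fun n : ℕ => (L ^ n) h) Filter.atTop (nhds 0) := by
    intro h hh
    apply squeeze_zero_norm (fun n => hgap n h hh)
    have := (tendsto_pow_atTop_nhds_zero_of_lt_one h1δ0 h1δ1).const_mul D
    simpa using this.mul_const ‖h‖
  -- the key telescoping identity
  have key : ∀ g : X, μ g = 0 → ∑' n : ℕ, (L ^ n) (g - Tc g) = -(Tc g) := by
    intro g hg
    have hgTg : μ (g - Tc g) = 0 := by rw [map_sub, hμT]; ring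
    have hsg : Summable (fun n : ℕ => (L ^ n) (g - Tc g)) := hsum _ hgTg
    have hu : ∀ i : ℕ, (L ^ i) (g - Tc g) = (L ^ (i+1)) (Tc g) - (L ^ i) (Tc g) := by
      intro i
      rw [pow_succ, ContinuousLinearMap.mul_apply, hleft, map_sub]
    have htel : ∀ n : ℕ, ∑ i ∈ Finset.range n, (L ^ i) (g - Tc g)
        = (L ^ n) (Tc g) - Tc g := by
      intro n
      calc ∑ i ∈ Finset.range n, (L ^ i) (g - Tc g)
          = ∑ i ∈ Finset.range n, ((L ^ (i+1)) (Tc g) - (L ^ i) (Tc g)) := by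
            exact Finset.sum_congr rfl fun i _ => hu i
        _ = (L ^ n) (Tc g) - (L ^ 0) (Tc g) := Finset.sum_range_sub (fun i => (L ^ i) (Tc g)) n
        _ = (L ^ n) (Tc g) - Tc g := by simp
    have hμTg : μ (Tc g) = 0 := by rw [hμT]; exact hg
    have ht1 : Filter.Tendsto (fun n : ℕ => ∑ i ∈ Finset.range n, (L ^ i) (g - Tc g))
        Filter.atTop (nhds (-(Tc g))) := by
      simp only [htel]
      have := (hzero (Tc g) hμTg).sub_const (Tc g)
      simpa using this
    exact tendsto_nhds_unique hsg.hasSum.tendsto_sum_nat ht1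
  -- build the bounded operator S
  have hsumP : ∀ f : X, Summable (fun n : ℕ => (L ^ n) (P f)) :=
    fun f => hsum (P f) (hμP f)
  let Slin : X →ₗ[ℝ] X :=
    { toFun := fun f => ∑' n : ℕ, (L ^ n) (P f)
      map_add' := by
        intro f g
        simp only [map_add]
        exact Summable.tsum_add (hsumP f) (hsumP g)
      map_smul' := by
        intro c f
        simp only [map_smul, RingHom.id_apply]
        exact Summable.tsum_const_smul c (hsumP f) }
  have hSbound : ∀ f : X, ‖Slin f‖ ≤ (D / δ * ‖P‖) * ‖f‖ := by
    intro f
    have h1 : ‖Slin f‖ ≤ ∑' n : ℕ, ‖(L ^ n) (P f)‖ := by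
      apply norm_tsum_le_tsum_norm
      exact (hgeo.mul_right ‖P f‖).of_nonneg_of_le (fun n => norm_nonneg _)
        (fun n => hgap n (P f) (hμP f))
    have h2 : ∑' n : ℕ, ‖(L ^ n) (P f)‖ ≤ ∑' n : ℕ, D * (1 - δ) ^ n * ‖P f‖ := by
      apply Summable.tsum_le_tsum (fun n => hgap n (P f) (hμP f))
      · exact (hgeo.mul_right ‖P f‖).of_nonneg_of_le (fun n => norm_nonneg _)
          (fun n => hgap n (P f) (hμP f))
      · exact hgeo.mul_right _
    have h3 : ∑' n : ℕ, D * (1 - δ) ^ n * ‖P f‖ = D / δ * ‖P f‖ := by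
      rw [tsum_mul_right]
      rw [tsum_mul_left, tsum_geometric_of_lt_one h1δ0 h1δ1]
      rw [sub_sub_cancel]; field_simp
    have h4 : ‖P f‖ ≤ ‖P‖ * ‖f‖ := P.le_opNorm f
    calc ‖Slin f‖ ≤ D / δ * ‖P f‖ := by rw [← h3]; exact h1.trans h2
      _ ≤ D / δ * (‖P‖ * ‖f‖) := by
          apply mul_le_mul_of_nonneg_left h4
          positivity
      _ = (D / δ * ‖P‖) * ‖f‖ := by ring
  let S : X →L[ℝ] X := Slin.mkContinuous (D / δ * ‖P‖) hSbound
  have hSapply : ∀ f : X, S f = ∑' n : ℕ, (L ^ n) (P f) := fun f => rfl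
  let Φ : X →L[ℝ] X := P + L.comp S - Tc.comp (L.comp S)
  have hΦapply : ∀ f : X, Φ f = P f + L (S f) - Tc (L (S f)) := fun f => rfl
  have hset : {f : X | ∃ (g : X) (c : ℝ), f = g - Tc g + c • e} = Φ ⁻¹' {0} := by
    ext f
    simp only [Set.mem_setOf_eq, Set.mem_preimage, Set.mem_singleton_iff]
    constructor
    · rintro ⟨g, c, rfl⟩
      set g₀ : X := g - μ g • e with hg₀def
      have hμg₀ : μ g₀ = 0 := by simp [hg₀def, map_sub, map_smul, hμe]
      have hμf : μ (g - Tc g + c • e) = c := by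
        simp [map_add, map_sub, map_smul, hμT, hμe]
      have hPf : P (g - Tc g + c • e) = g₀ - Tc g₀ := by
        rw [hPapply, hμf, hg₀def, map_sub, map_smul, hTe]
        abel
      have hSf : S (g - Tc g + c • e) = -(Tc g₀) := by
        rw [hSapply, hPf]
        exact key g₀ hμg₀
      rw [hΦapply, hPf, hSf, map_neg, hleft, map_neg]
      abel
    · intro hf
      refine ⟨-(L (S f)), μ f, ?_⟩
      have h0 : P f + L (S f) - Tc (L (S f)) = 0 := by rw [← hΦapply]; exact hf
      have h0' : f - μ f • e + L (S f) - Tc (L (S f)) = 0 := by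
        rw [← hPapply]; exact h0
      generalize hA : L (S f) = a at h0' ⊢
      rw [map_neg, sub_neg_eq_add]
      have : f = -a + Tc a + μ f • e := by
        have h5 : f - μ f • e + a - Tc a + (-a + Tc a + μ f • e) = -a + Tc a + μ f • e := by
          rw [h0']; abel
        calc f = f - μ f • e + a - Tc a + (-a + Tc a + μ f • e) := by abel
          _ = -a + Tc a + μ f • e := h5
      exact this
  rw [hset]
  exact IsClosed.preimage Φ.continuous isClosed_singleton
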